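/- Let Y be an integrable real random variable with CDF F and α ∈ (0,1). A point ŷ minimizes the expected pinball loss E[(1-α)(ŷ-Y)⁺ + α(Y-ŷ)⁺] if and only if P(Y ≤ ŷ) ≥ α and P(Y < ŷ) ≤ α (i.e., ŷ is an α-quantile of Y). -/

import Mathlib

open MeasureTheory Filter Topology

/-- Pointwise upper bound for the loss difference when `t ≤ z`. -/
lemma pb_ub_right (α t z y : ℝ) (hα0 : 0 ≤ α) (hα1 : α ≤ 1) (htz : t ≤ z) :
    ((1 - α) * max (z - y) 0 + α * max (y - z) 0) -
      ((1 - α) * max (t - y) 0 + α * max (y - t) 0)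
      ≤ (z - t) * ((if y ≤ z then (1:ℝ) else 0) - α) := by
  rcases le_or_gt y z with h | h
  · rw [if_pos h]
    rcases le_or_gt y t with h2 | h2
    · rw [max_eq_left (by linarith), max_eq_right (by linarith),
        max_eq_left (by linarith), max_eq_right (by linarith)]
      nlinarith
    · rw [max_eq_left (by linarith), max_eq_right (by linarith),
        max_eq_right (by linarith), max_eq_left (by linarith)]
      nlinarith
  · rw [if_neg (not_le.mpr h)]
    rw [max_eq_right (by linarith), max_eq_left (by linarith),
      max_eq_right (by linarith), max_eq_left (by linarith)]
    nlinarith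

/-- Pointwise lower bound for the loss difference when `t ≤ z`. -/
lemma pb_lb_right (α t z y : ℝ) (hα0 : 0 ≤ α) (hα1 : α ≤ 1) (htz : t ≤ z) :
    (z - t) * ((if y ≤ t then (1:ℝ) else 0) - α) ≤
      ((1 - α) * max (z - y) 0 + α * max (y - z) 0) -
        ((1 - α) * max (t - y) 0 + α * max (y - t) 0) := by
  rcases le_or_gt y t with h2 | h2
  · rw [if_pos h2]
    rw [max_eq_left (by linarith), max_eq_right (by linarith),
      max_eq_left (by linarith), max_eq_right (by linarith)]
    nlinarith
  · rw [if_neg (not_le.mpr h2)]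
    rcases le_or_gt y z with h | h
    · rw [max_eq_left (by linarith), max_eq_right (by linarith),
        max_eq_right (by linarith), max_eq_left (by linarith)]
      nlinarith
    · rw [max_eq_right (by linarith), max_eq_left (by linarith),
        max_eq_right (by linarith), max_eq_left (by linarith)]
      nlinarith

/-- Pointwise upper bound for the loss difference when `z ≤ t`. -/
lemma pb_ub_left (α t z y : ℝ) (hα0 : 0 ≤ α) (hα1 : α ≤ 1) (htz : z ≤ t) :
    ((1 - α) * max (z - y) 0 + α * max (y - z) 0) -
      ((1 - α) * max (t - y) 0 + α * max (y - t) 0)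
      ≤ (t - z) * (α - (if y ≤ z then (1:ℝ) else 0)) := by
  rcases le_or_gt y z with h | h
  · rw [if_pos h]
    rw [max_eq_left (by linarith), max_eq_right (by linarith),
      max_eq_left (by linarith), max_eq_right (by linarith)]
    nlinarith
  · rw [if_neg (not_le.mpr h)]
    rcases lt_or_ge y t with h2 | h2
    · rw [max_eq_right (by linarith), max_eq_left (by linarith),
        max_eq_left (by linarith), max_eq_right (by linarith)]
      nlinarith
    · rw [max_eq_right (by linarith), max_eq_left (by linarith),
        max_eq_right (by linarith), max_eq_left (by linarith)]
      nlinarith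

/-- Pointwise lower bound for the loss difference when `z ≤ t`. -/
lemma pb_lb_left (α t z y : ℝ) (hα0 : 0 ≤ α) (hα1 : α ≤ 1) (htz : z ≤ t) :
    (t - z) * (α - (if y < t then (1:ℝ) else 0)) ≤
      ((1 - α) * max (z - y) 0 + α * max (y - z) 0) -
        ((1 - α) * max (t - y) 0 + α * max (y - t) 0) := by
  rcases lt_or_ge y t with h2 | h2
  · rw [if_pos h2]
    rcases le_or_gt y z with h | h
    · rw [max_eq_left (by linarith), max_eq_right (by linarith),
        max_eq_left (by linarith), max_eq_right (by linarith)]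
      nlinarith
    · rw [max_eq_right (by linarith), max_eq_left (by linarith),
        max_eq_left (by linarith), max_eq_right (by linarith)]
      nlinarith
  · rw [if_neg (not_lt.mpr h2)]
    rw [max_eq_right (by linarith), max_eq_left (by linarith),
      max_eq_right (by linarith), max_eq_left (by linarith)]
    nlinarith

/-- A point minimizes the expected pinball loss iff it is an α-quantile:
P(Y ≤ yh) ≥ α and P(Y < yh) ≤ α. -/
theorem pinball_min_iff_quantile
    {Ω : Type*} [MeasurableSpace Ω] (ℙ : Measure Ω) [IsProbabilityMeasure ℙ]
    (Y : Ω → ℝ) (hYm : Measurable Y) (hYint : Integrable Y ℙ)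
    (α : ℝ) (hα : α ∈ Set.Ioo (0 : ℝ) 1) (yh : ℝ) :
    (∀ z : ℝ,
      ∫ ω, ((1 - α) * max (yh - Y ω) 0 + α * max (Y ω - yh) 0) ∂ℙ ≤
      ∫ ω, ((1 - α) * max (z - Y ω) 0 + α * max (Y ω - z) 0) ∂ℙ) ↔
    (α ≤ (ℙ {ω | Y ω ≤ yh}).toReal ∧ (ℙ {ω | Y ω < yh}).toReal ≤ α) := by
  classical
  obtain ⟨hα0, hα1⟩ := hα
  set L : ℝ → Ω → ℝ := fun z ω => (1 - α) * max (z - Y ω) 0 + α * max (Y ω - z) 0 with hL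
  have intL : ∀ z : ℝ, Integrable (L z) ℙ := fun z =>
    ((((integrable_const z).sub hYint).pos_part).const_mul _).add
      (((hYint.sub (integrable_const z)).pos_part).const_mul _)
  -- integral of an indicator-type bound
  have intBound : ∀ (s : Set Ω), MeasurableSet s → ∀ c β : ℝ,
      Integrable (fun ω => c * ((if ω ∈ s then (1:ℝ) else 0) - β)) ℙ := by
    intro s hs c β
    have h1 : Integrable (fun ω => (if ω ∈ s then (1:ℝ) else 0)) ℙ := by
      have := (integrable_const (1:ℝ)).indicator (μ := ℙ) hs
      exact this.congr (Filter.Eventually.of_forall fun ω => by simp [Set.indicator_apply])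
    exact (h1.sub (integrable_const β)).const_mul c
  have intInd : ∀ (s : Set Ω), MeasurableSet s → ∀ c β : ℝ,
      ∫ ω, c * ((if ω ∈ s then (1:ℝ) else 0) - β) ∂ℙ = c * ((ℙ s).toReal - β) := by
    intro s hs c β
    rw [integral_const_mul]
    have h1 : Integrable (fun ω => (if ω ∈ s then (1:ℝ) else 0)) ℙ := by
      have := (integrable_const (1:ℝ)).indicator (μ := ℙ) hs
      exact this.congr (Filter.Eventually.of_forall fun ω => by simp [Set.indicator_apply])
    rw [integral_sub h1 (integrable_const β), integral_const]
    have h2 : ∫ ω, (if ω ∈ s then (1:ℝ) else 0) ∂ℙ = (ℙ s).toReal := by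
      have := integral_indicator_const (μ := ℙ) (1:ℝ) hs
      simpa [Set.indicator_apply, Measure.real] using this
    rw [h2]
    simp [measure_univ]
  constructor
  · intro hmin
    have key1 : ∀ z, yh < z → α ≤ (ℙ {ω | Y ω ≤ z}).toReal := by
      intro z hz
      have hs : MeasurableSet {ω | Y ω ≤ z} := hYm measurableSet_Iic
      have hmono : ∫ ω, (L z ω - L yh ω) ∂ℙ ≤
          ∫ ω, (z - yh) * ((if ω ∈ {ω | Y ω ≤ z} then (1:ℝ) else 0) - α) ∂ℙ := by
        refine integral_mono ((intL z).sub (intL yh)) (intBound _ hs _ _) fun ω => ?_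
        simpa [Set.mem_setOf_eq] using
          pb_ub_right α yh z (Y ω) hα0.le hα1.le hz.le
      rw [integral_sub (intL z) (intL yh), intInd _ hs] at hmono
      have h0 : (0:ℝ) ≤ ∫ ω, L z ω ∂ℙ - ∫ ω, L yh ω ∂ℙ := sub_nonneg.mpr (hmin z)
      nlinarith
    have key2 : ∀ z, z < yh → (ℙ {ω | Y ω ≤ z}).toReal ≤ α := by
      intro z hz
      have hs : MeasurableSet {ω | Y ω ≤ z} := hYm measurableSet_Iic
      have hmono : ∫ ω, (L z ω - L yh ω) ∂ℙ ≤
          ∫ ω, (yh - z) * (α - (if ω ∈ {ω | Y ω ≤ z} then (1:ℝ) else 0)) ∂ℙ := by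
        refine integral_mono ((intL z).sub (intL yh)) ?_ fun ω => ?_
        · exact (intBound _ hs (-(yh - z)) α).congr
            (Filter.Eventually.of_forall fun ω => by ring)
        · simpa [Set.mem_setOf_eq] using
            pb_ub_left α yh z (Y ω) hα0.le hα1.le hz.le
      have hint2 : ∫ ω, (yh - z) * (α - (if ω ∈ {ω | Y ω ≤ z} then (1:ℝ) else 0)) ∂ℙ
          = (yh - z) * (α - (ℙ {ω | Y ω ≤ z}).toReal) := by
        have := intInd _ hs (-(yh - z)) α
        calc ∫ ω, (yh - z) * (α - (if ω ∈ {ω | Y ω ≤ z} then (1:ℝ) else 0)) ∂ℙ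
            = ∫ ω, (-(yh - z)) * ((if ω ∈ {ω | Y ω ≤ z} then (1:ℝ) else 0) - α) ∂ℙ := by
              congr 1; funext ω; ring
          _ = (-(yh - z)) * ((ℙ {ω | Y ω ≤ z}).toReal - α) := this
          _ = (yh - z) * (α - (ℙ {ω | Y ω ≤ z}).toReal) := by ring
      rw [integral_sub (intL z) (intL yh), hint2] at hmono
      have h0 : (0:ℝ) ≤ ∫ ω, L z ω ∂ℙ - ∫ ω, L yh ω ∂ℙ := sub_nonneg.mpr (hmin z)
      nlinarith
    constructor
    · -- limit z ↓ yh
      set s : ℕ → Set Ω := fun n => {ω | Y ω ≤ yh + 1 / (n + 1)} with hsdef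
      have hiInter : ⋂ n, s n = {ω | Y ω ≤ yh} := by
        ext ω
        simp only [Set.mem_iInter, Set.mem_setOf_eq, hsdef]
        constructor
        · intro h
          by_contra hc
          push_neg at hc
          obtain ⟨n, hn⟩ := exists_nat_one_div_lt (sub_pos.mpr hc)
          have := h n
          push_cast at hn ⊢
          linarith
        · intro h n
          have : (0:ℝ) < 1 / (n + 1) := by positivity
          linarith
      have hanti : Antitone s := by
        intro n m hnm ω hω
        simp only [hsdef, Set.mem_setOf_eq] at hω ⊢
        have : (1:ℝ) / (m + 1) ≤ 1 / (n + 1) := by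
          apply one_div_le_one_div_of_le (by positivity)
          push_cast; exact_mod_cast by exact_mod_cast add_le_add_left (Nat.cast_le.mpr hnm) 1
        linarith
      have htends : Tendsto (fun n => ℙ (s n)) atTop (𝓝 (ℙ {ω | Y ω ≤ yh})) := by
        have := tendsto_measure_iInter_atTop (μ := ℙ) (s := s)
          (fun n => (hYm measurableSet_Iic).nullMeasurableSet)
          hanti ⟨0, measure_ne_top _ _⟩
        rwa [hiInter] at this
      have htendsR : Tendsto (fun n => (ℙ (s n)).toReal) atTop
          (𝓝 ((ℙ {ω | Y ω ≤ yh}).toReal)) :=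
        (ENNReal.tendsto_toReal (measure_ne_top ℙ _)).comp htends
      refine ge_of_tendsto' htendsR fun n => ?_
      apply key1
      have : (0:ℝ) < 1 / (n + 1) := by positivity
      linarith
    · -- limit z ↑ yh
      set s : ℕ → Set Ω := fun n => {ω | Y ω ≤ yh - 1 / (n + 1)} with hsdef
      have hiUnion : ⋃ n, s n = {ω | Y ω < yh} := by
        ext ω
        simp only [Set.mem_iUnion, Set.mem_setOf_eq, hsdef]
        constructor
        · rintro ⟨n, hn⟩
          have : (0:ℝ) < 1 / (n + 1) := by positivity
          linarith
        · intro h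
          obtain ⟨n, hn⟩ := exists_nat_one_div_lt (sub_pos.mpr h)
          exact ⟨n, by push_cast at hn ⊢; linarith⟩
      have hmono : Monotone s := by
        intro n m hnm ω hω
        simp only [hsdef, Set.mem_setOf_eq] at hω ⊢
        have : (1:ℝ) / (m + 1) ≤ 1 / (n + 1) := by
          apply one_div_le_one_div_of_le (by positivity)
          exact_mod_cast add_le_add_left (Nat.cast_le.mpr hnm) 1
        linarith
      have htends : Tendsto (fun n => ℙ (s n)) atTop (𝓝 (ℙ {ω | Y ω < yh})) := by
        have := tendsto_measure_iUnion_atTop (μ := ℙ) hmono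
        rwa [hiUnion] at this
      have htendsR : Tendsto (fun n => (ℙ (s n)).toReal) atTop
          (𝓝 ((ℙ {ω | Y ω < yh}).toReal)) :=
        (ENNReal.tendsto_toReal (measure_ne_top ℙ _)).comp htends
      refine le_of_tendsto' htendsR fun n => ?_
      apply key2
      have : (0:ℝ) < 1 / (n + 1) := by positivity
      linarith
  · rintro ⟨h1, h2⟩ z
    rcases le_or_gt yh z with hz | hz
    · have hs : MeasurableSet {ω | Y ω ≤ yh} := hYm measurableSet_Iic
      have hmono : ∫ ω, (z - yh) * ((if ω ∈ {ω | Y ω ≤ yh} then (1:ℝ) else 0) - α) ∂ℙ ≤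
          ∫ ω, (L z ω - L yh ω) ∂ℙ := by
        refine integral_mono (intBound _ hs _ _) ((intL z).sub (intL yh)) fun ω => ?_
        simpa [Set.mem_setOf_eq] using
          pb_lb_right α yh z (Y ω) hα0.le hα1.le hz
      rw [integral_sub (intL z) (intL yh), intInd _ hs] at hmono
      have hnn : (0:ℝ) ≤ (z - yh) * ((ℙ {ω | Y ω ≤ yh}).toReal - α) :=
        mul_nonneg (by linarith) (by linarith)
      linarith
    · have hs : MeasurableSet {ω | Y ω < yh} := hYm measurableSet_Iio
      have hmono : ∫ ω, (-(yh - z)) * ((if ω ∈ {ω | Y ω < yh} then (1:ℝ) else 0) - α) ∂ℙ ≤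
          ∫ ω, (L z ω - L yh ω) ∂ℙ := by
        refine integral_mono (intBound _ hs _ _) ((intL z).sub (intL yh)) fun ω => ?_
        have := pb_lb_left α yh z (Y ω) hα0.le hα1.le hz.le
        simp only [Set.mem_setOf_eq]
        calc (-(yh - z)) * ((if Y ω < yh then (1:ℝ) else 0) - α)
            = (yh - z) * (α - (if Y ω < yh then (1:ℝ) else 0)) := by ring
          _ ≤ _ := this
      rw [integral_sub (intL z) (intL yh), intInd _ hs] at hmono
      have hnn : (0:ℝ) ≤ (-(yh - z)) * ((ℙ {ω | Y ω < yh}).toReal - α) := by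
        nlinarith [h2, hz]
      linarith
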